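/- Let G be a finite simple graph with chromatic number at least 3. Then there exist constants c, C > 0 (depending only on G) and n_0 such that for all n ≥ n_0: c·C(n, emb(n,G)) ≤ 2^n - vex(n, G) ≤ C·C(n, emb(n,G)). -/

import Mathlib

open Finset

/-- The Kneser cube: the simple graph on all subsets of `[n]`, with two distinct
sets adjacent iff they are disjoint. -/
def kneserCube (n : ℕ) : SimpleGraph (Finset (Fin n)) where
  Adj A B := A ≠ B ∧ Disjoint A B
  symm := ⟨fun _ _ h => ⟨h.1.symm, h.2.symm⟩⟩
  loopless := ⟨fun _ h => h.1 rfl⟩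

/-- The Kneser graph `Kn(n, m)`: the simple graph on all `m`-element subsets of `[n]`,
with two distinct sets adjacent iff they are disjoint. -/
def kneserGraph (n m : ℕ) : SimpleGraph {A : Finset (Fin n) // A.card = m} where
  Adj A B := A ≠ B ∧ Disjoint A.1 B.1
  symm := ⟨fun _ _ h => ⟨h.1.symm, h.2.symm⟩⟩
  loopless := ⟨fun _ h => h.1 rfl⟩

/-- `H` contains a subgraph isomorphic to `G`, i.e. there is an injective graph
homomorphism from `G` into `H`. -/
def hasCopy {V W : Type*} (G : SimpleGraph V) (H : SimpleGraph W) : Prop :=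
  ∃ f : V → W, Function.Injective f ∧ ∀ a b, G.Adj a b → H.Adj (f a) (f b)

/-- A family `F` of subsets of `[n]` is `G`-free if the subgraph of the Kneser cube
induced on `F` contains no subgraph isomorphic to `G`. -/
def gFree {V : Type*} (G : SimpleGraph V) (n : ℕ) (F : Finset (Finset (Fin n))) : Prop :=
  ¬ ∃ f : V → Finset (Fin n),
      Function.Injective f ∧ (∀ v, f v ∈ F) ∧
        ∀ a b, G.Adj a b → (kneserCube n).Adj (f a) (f b)

/-- `vexG n G` : the maximum size of a `G`-free family of subsets of `[n]`. -/
noncomputable def vexG {V : Type*} (n : ℕ) (G : SimpleGraph V) : ℕ :=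
  sSup {k | ∃ F : Finset (Finset (Fin n)), gFree G n F ∧ F.card = k}

/-- `emb n G` : the maximum `m` such that the Kneser graph `Kn(n, m)` contains a
subgraph isomorphic to `G`. -/
noncomputable def emb {V : Type*} (n : ℕ) (G : SimpleGraph V) : ℕ :=
  sSup {m | hasCopy G (kneserGraph n m)}

theorem odd_walk_of_chrom {V : Type*} (G : SimpleGraph V)
    (hchi : 3 ≤ G.chromaticNumber) :
    ∃ (v : V) (w : G.Walk v v), Odd w.length := by
  by_contra hno
  push_neg at hno
  have hcol : G.Colorable 2 := by
    classical
    let rep : V → V := fun v => (G.connectedComponentMk v).out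
    have hreach : ∀ v, G.Reachable (rep v) v := by
      intro v
      apply SimpleGraph.ConnectedComponent.exact
      show G.connectedComponentMk _ = _
      exact (G.connectedComponentMk v).out_eq
    let wlk : ∀ v, G.Walk (rep v) v := fun v => (hreach v).some
    refine ⟨SimpleGraph.Coloring.mk
      (fun v => (⟨(wlk v).length % 2, Nat.mod_lt _ (by norm_num)⟩ : Fin 2)) ?_⟩
    intro u v hadj hEq
    have hrep : rep u = rep v := by
      have : G.connectedComponentMk u = G.connectedComponentMk v :=
        SimpleGraph.ConnectedComponent.sound hadj.reachable
      simp only [rep, this]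
    set wv' : G.Walk (rep u) v := (wlk v).copy hrep.symm rfl with hwv
    have hlenv : wv'.length = (wlk v).length := SimpleGraph.Walk.length_copy _ _ _
    set w : G.Walk (rep u) (rep u) :=
      ((wlk u).append (SimpleGraph.Walk.cons hadj SimpleGraph.Walk.nil)).append wv'.reverse with hw
    have hlen : w.length = (wlk u).length + 1 + (wlk v).length := by
      simp [hw, SimpleGraph.Walk.length_append, SimpleGraph.Walk.length_reverse, hlenv]
    have heven : Even w.length := Nat.not_odd_iff_even.mp (hno _ w)
    rw [hlen, Nat.even_iff] at heven
    have hmod : (wlk u).length % 2 ≠ (wlk v).length % 2 := by omega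
    exact hmod (by simpa [Fin.ext_iff] using hEq)
  have hle := hcol.chromaticNumber_le
  have : (3:ℕ∞) ≤ 2 := le_trans hchi hle
  norm_num at this

theorem walk_bound {V : Type*} {G : SimpleGraph V} {v : V} (w : G.Walk v v) {l : ℕ}
    (hlen : w.length = 2 * l + 1) {n m : ℕ}
    (f : V → {A : Finset (Fin n) // A.card = m})
    (hadj : ∀ a b, G.Adj a b → (kneserGraph n m).Adj (f a) (f b)) :
    m * (2 * l + 1) ≤ l * n := by
  classical
  set A : ℕ → Finset (Fin n) := fun i => (f (w.getVert i)).1 with hA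
  have hcard : ∀ i, (A i).card = m := fun i => (f (w.getVert i)).2
  have hdisj : ∀ i, i < w.length → Disjoint (A i) (A (i + 1)) := by
    intro i hi
    exact (hadj _ _ (w.adj_getVert_succ hi)).2
  have hmn : m ≤ n := by
    have := Finset.card_le_univ (A 0)
    simpa [hcard 0] using this
  have key : ∀ j, j ≤ l → m + 2 * m * j ≤ (A 0 ∩ A (2 * j)).card + j * n := by
    intro j hj
    induction j with
    | zero => simp [hcard 0]
    | succ j ih =>
      have hj' : j ≤ l := Nat.le_of_succ_le hj
      have IH := ih hj'
      -- step
      have h1 : 2 * j + 1 < w.length := by omega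
      have h0 : 2 * j < w.length := by omega
      have hXsub : A 0 ∩ A (2 * j) ⊆ (A (2 * j + 1))ᶜ := by
        intro x hx
        simp only [Finset.mem_compl]
        intro hx'
        exact Finset.disjoint_left.mp (hdisj _ h0) (Finset.mem_inter.mp hx).2 hx'
      have hA2sub : A (2 * j + 2) ⊆ (A (2 * j + 1))ᶜ := by
        intro x hx
        simp only [Finset.mem_compl]
        intro hx'
        exact Finset.disjoint_left.mp (hdisj _ h1) hx' hx
      set X := A 0 ∩ A (2 * j) with hX
      set A' := A (2 * j + 2) with hA'
      have hunion : (X ∪ A').card + m ≤ n := by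
        have h2 : X ∪ A' ⊆ (A (2 * j + 1))ᶜ := Finset.union_subset hXsub hA2sub
        have h3 := Finset.card_le_card h2
        have h4 : ((A (2 * j + 1))ᶜ).card + (A (2 * j + 1)).card = n := by
          rw [Finset.card_compl]
          have := Finset.card_le_univ (A (2 * j + 1))
          simp only [Fintype.card_fin] at *
          omega
        rw [hcard] at h4
        omega
      have hie : X.card + A'.card = (X ∪ A').card + (X ∩ A').card :=
        (Finset.card_union_add_card_inter X A').symm
      have hsub2 : X ∩ A' ⊆ A 0 ∩ A (2 * (j + 1)) := by
        intro x hx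
        simp only [hX, Finset.mem_inter] at hx ⊢
        constructor
        · exact hx.1.1
        · have : 2 * (j + 1) = 2 * j + 2 := by ring
          rw [this]; exact hx.2
      have h5 := Finset.card_le_card hsub2
      have hcA' : A'.card = m := hcard _
      have : X.card + 2 * m ≤ (A 0 ∩ A (2 * (j + 1))).card + n := by omega
      calc m + 2 * m * (j + 1) = (m + 2 * m * j) + 2 * m := by ring
        _ ≤ (X.card + j * n) + 2 * m := by omega
        _ ≤ ((A 0 ∩ A (2 * (j + 1))).card + n) + j * n := by omega
        _ = (A 0 ∩ A (2 * (j + 1))).card + (j + 1) * n := by ring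
  have hfin := key l le_rfl
  have hlast : A (2 * l + 1) = A 0 := by
    simp only [hA]
    congr 1
    rw [← hlen]
    simp [SimpleGraph.Walk.getVert_length]
  have hd : Disjoint (A (2 * l)) (A 0) := by
    have := hdisj (2 * l) (by omega)
    rwa [hlast] at this
  have hzero : (A 0 ∩ A (2 * l)).card = 0 := by
    rw [Finset.card_eq_zero]
    exact Finset.disjoint_iff_inter_eq_empty.mp hd.symm
  rw [hzero] at hfin
  nlinarith

theorem hasCopy_blocks {V : Type*} [Fintype V] (G : SimpleGraph V) (n m : ℕ)
    (hm : 1 ≤ m) (hn : Fintype.card V * m ≤ n) :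
    hasCopy G (kneserGraph n m) := by
  classical
  set k := Fintype.card V with hk
  let ι : V ≃ Fin k := (Fintype.equivFin V)
  have hbound : ∀ (i : Fin k) (t : Fin m), m * i.1 + t.1 < n := by
    intro i t
    have hi : i.1 + 1 ≤ k := i.2
    have : m * i.1 + t.1 < m * (i.1 + 1) := by
      have := t.2; nlinarith
    have h2 : m * (i.1 + 1) ≤ m * k := Nat.mul_le_mul_left m hi
    have h3 : m * k ≤ n := by rw [Nat.mul_comm]; exact hn
    omega
  let emb : Fin k → (Fin m ↪ Fin n) := fun i =>
    ⟨fun t => ⟨m * i.1 + t.1, hbound i t⟩, by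
      intro a b hab
      simp only [Fin.mk.injEq] at hab
      exact Fin.ext (by omega)⟩
  let B : V → Finset (Fin n) := fun v => Finset.univ.map (emb (ι v))
  have hcard : ∀ v, (B v).card = m := by
    intro v; simp [B]
  have hmem : ∀ v (x : Fin n), x ∈ B v → x.1 / m = (ι v).1 := by
    intro v x hx
    simp only [B, Finset.mem_map, Finset.mem_univ, true_and] at hx
    obtain ⟨t, ht⟩ := hx
    rw [← ht]
    simp only [emb, Function.Embedding.coeFn_mk]
    show (m * (ι v).1 + t.1) / m = (ι v).1
    rw [Nat.mul_add_div (by omega), Nat.div_eq_of_lt t.2, Nat.add_zero]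
  have hdisj : ∀ u v, u ≠ v → Disjoint (B u) (B v) := by
    intro u v huv
    rw [Finset.disjoint_left]
    intro x hxu hxv
    have h1 := hmem u x hxu
    have h2 := hmem v x hxv
    exact huv (ι.injective (Fin.ext (h1 ▸ h2 ▸ rfl)))
  have hBne : ∀ u v, u ≠ v → B u ≠ B v := by
    intro u v huv hEq
    have hd := hdisj u v huv
    rw [hEq] at hd
    have : B v = ∅ := disjoint_self.mp hd
    have hc := hcard v
    rw [this] at hc
    simp at hc
    omega
  refine ⟨fun v => ⟨B v, hcard v⟩, ?_, ?_⟩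
  · intro u v huv
    by_contra hne
    exact hBne u v hne (congrArg Subtype.val huv)
  · intro a b hab
    exact ⟨fun h => hBne a b hab.ne (congrArg Subtype.val h), hdisj a b hab.ne⟩

theorem shrink_lemma {V : Type*} [Fintype V] {G : SimpleGraph V} {n s : ℕ}
    (hs : Fintype.card V ≤ s) :
    ∀ (N : ℕ) (f : V → Finset (Fin n)),
      (∑ v, (f v).card) ≤ N → Function.Injective f → (∀ v, s ≤ (f v).card) →
      (∀ a b, G.Adj a b → Disjoint (f a) (f b)) →
      ∃ g : V → Finset (Fin n), Function.Injective g ∧ (∀ v, g v ⊆ f v ∧ (g v).card = s) ∧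
        (∀ a b, G.Adj a b → Disjoint (g a) (g b)) := by
  classical
  intro N
  induction N with
  | zero =>
    intro f hsum hinj hcards hdisj
    refine ⟨f, hinj, fun v => ⟨subset_rfl, ?_⟩, hdisj⟩
    have h0 : (f v).card = 0 := by
      have : (f v).card ≤ ∑ v, (f v).card :=
        Finset.single_le_sum (f := fun v => (f v).card) (fun _ _ => Nat.zero_le _) (mem_univ v)
      omega
    have := hcards v
    omega
  | succ N ih =>
    intro f hsum hinj hcards hdisj
    by_cases hall : ∀ v, (f v).card = s
    · exact ⟨f, hinj, fun v => ⟨subset_rfl, hall v⟩, hdisj⟩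
    · push_neg at hall
      obtain ⟨v₀, hv₀⟩ := hall
      have hbig : s + 1 ≤ (f v₀).card := lt_of_le_of_ne (hcards v₀) (Ne.symm hv₀)
      -- the set of bad elements
      set badset := (f v₀).filter (fun x => ∃ u, (f v₀).erase x = f u ∧ u ≠ v₀) with hbs
      have hbadcard : badset.card ≤ Fintype.card V - 1 := by
        have hinjOn : Set.InjOn (fun x => if h : ∃ u, (f v₀).erase x = f u ∧ u ≠ v₀
            then h.choose else v₀) badset := by
          intro x hx y hy hxy
          simp only [hbs, mem_coe, mem_filter] at hx hy
          obtain ⟨hxm, hxe⟩ := hx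
          obtain ⟨hym, hye⟩ := hy
          simp only [dif_pos hxe, dif_pos hye] at hxy
          have h1 := hxe.choose_spec.1
          have h2 := hye.choose_spec.1
          rw [hxy] at h1
          have h3 : (f v₀).erase x = (f v₀).erase y := h1.trans h2.symm
          by_contra hne
          have hyx : y ∈ (f v₀).erase x := Finset.mem_erase.mpr ⟨fun h => hne h.symm, hym⟩
          rw [h3] at hyx
          exact absurd hyx (Finset.notMem_erase y _)
        have hmaps : ∀ x ∈ badset, (if h : ∃ u, (f v₀).erase x = f u ∧ u ≠ v₀
            then h.choose else v₀) ∈ (univ : Finset V).erase v₀ := by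
          intro x hx
          simp only [hbs, mem_filter] at hx
          simp only [dif_pos hx.2]
          exact Finset.mem_erase.mpr ⟨hx.2.choose_spec.2, mem_univ _⟩
        have := Finset.card_le_card_of_injOn _ hmaps hinjOn
        simpa [Finset.card_erase_of_mem, Finset.card_univ] using this
      have hpick : ((f v₀) \ badset).Nonempty := by
        rw [← Finset.card_pos]
        have h2 := Finset.le_card_sdiff badset (f v₀)
        omega
      obtain ⟨x, hx⟩ := hpick
      have hxm : x ∈ f v₀ := (Finset.mem_sdiff.mp hx).1
      have hxnb : ¬ ∃ u, (f v₀).erase x = f u ∧ u ≠ v₀ := by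
        have h := (Finset.mem_sdiff.mp hx).2
        simp only [hbs, mem_filter] at h
        exact fun hp => h ⟨hxm, hp⟩
      set f' := Function.update f v₀ ((f v₀).erase x) with hf'
      have hf'v : ∀ v, f' v ⊆ f v := by
        intro v
        by_cases h : v = v₀
        · subst h; simp [hf', Function.update_self]; exact Finset.erase_subset _ _
        · simp [hf', Function.update_of_ne h]
      have hf'card : ∀ v, s ≤ (f' v).card := by
        intro v
        by_cases h : v = v₀
        · subst h; simp [hf', Function.update_self, Finset.card_erase_of_mem hxm]; omega
        · simp [hf', Function.update_of_ne h]; exact hcards v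
      have hf'inj : Function.Injective f' := by
        intro u w huw
        by_cases hu : u = v₀ <;> by_cases hw : w = v₀
        · rw [hu, hw]
        · subst hu
          rw [hf', Function.update_self, Function.update_of_ne hw] at huw
          exact absurd ⟨w, huw, hw⟩ hxnb
        · subst hw
          rw [hf', Function.update_self, Function.update_of_ne hu] at huw
          exact absurd ⟨u, huw.symm, hu⟩ hxnb
        · rw [hf'] at huw
          rw [Function.update_of_ne hu, Function.update_of_ne hw] at huw
          exact hinj huw
      have hf'disj : ∀ a b, G.Adj a b → Disjoint (f' a) (f' b) := by
        intro a b hab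
        exact (hdisj a b hab).mono (hf'v a) (hf'v b)
      have hf'sum : (∑ v, (f' v).card) ≤ N := by
        have hsplit : ∀ g : V → Finset (Fin n), (∑ v, (g v).card) = (g v₀).card + ∑ v ∈ univ.erase v₀, (g v).card := by
          intro g
          rw [← Finset.sum_erase_add _ _ (mem_univ v₀)]
          ring
        rw [hsplit f'] at *
        rw [hsplit f] at hsum
        have h1 : (f' v₀).card = (f v₀).card - 1 := by
          simp [hf', Function.update_self, Finset.card_erase_of_mem hxm]
        have h2 : ∑ v ∈ univ.erase v₀, (f' v).card = ∑ v ∈ univ.erase v₀, (f v).card := by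
          apply Finset.sum_congr rfl
          intro v hv
          rw [hf', Function.update_of_ne (Finset.mem_erase.mp hv).1]
        omega
      obtain ⟨g, hg1, hg2, hg3⟩ := ih f' hf'sum hf'inj hf'card hf'disj
      exact ⟨g, hg1, fun v => ⟨(hg2 v).1.trans (hf'v v), (hg2 v).2⟩, hg3⟩

theorem ratio_step {n e l i : ℕ} (hl : 1 ≤ l) (hratio : (2*l+1)*e ≤ l*n)
    (hi : i + 1 ≤ e) : (l+1) * n.choose i ≤ l * n.choose (i+1) := by
  have hen : e ≤ n := by nlinarith
  have hin : i ≤ n := by omega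
  have h1 : (2*l+1)*(i+1) ≤ l*n :=
    le_trans (Nat.mul_le_mul_left _ hi) hratio
  have hkey : (l+1)*(i+1) ≤ l*(n-i) := by
    have hexp : l*(n-i) + l*i = l*n := by
      rw [← Nat.mul_add, Nat.sub_add_cancel hin]
    nlinarith
  have hid := Nat.choose_succ_right_eq n i
  -- choose n (i+1) * (i+1) = choose n i * (n - i)
  refine Nat.le_of_mul_le_mul_right ?_ (show 0 < i+1 by omega)
  calc (l+1) * n.choose i * (i+1) = n.choose i * ((l+1)*(i+1)) := by ring
      _ ≤ n.choose i * (l * (n-i)) := Nat.mul_le_mul_left _ hkey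
      _ = l * (n.choose i * (n-i)) := by ring
      _ = l * (n.choose (i+1) * (i+1)) := by rw [← hid]
      _ = l * n.choose (i+1) * (i+1) := by ring

theorem geom_bound {n e l : ℕ} (hl : 1 ≤ l) (hratio : (2*l+1)*e ≤ l*n) :
    (∑ i ∈ range (e+1), (n.choose i : ℝ)) ≤ (l+1) * n.choose e := by
  set q : ℝ := l / (l+1) with hq
  have hl0 : (0:ℝ) < l := by positivity
  have hl1 : (0:ℝ) < (l:ℝ)+1 := by positivity
  have hq0 : 0 ≤ q := by positivity
  have hq1 : q < 1 := by
    rw [hq, div_lt_one hl1]; linarith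
  have hstep : ∀ j, j ≤ e → (n.choose (e-j) : ℝ) ≤ q^j * n.choose e := by
    intro j
    induction j with
    | zero => intro _; simp
    | succ j ih =>
      intro hje
      have hje' : j ≤ e := by omega
      have IH := ih hje'
      have hs := ratio_step (i := e - j - 1) hl hratio (by omega)
      have hcast : ((l:ℝ)+1) * (n.choose (e-j-1) : ℝ) ≤ l * n.choose (e-j) := by
        have heq : (e - j - 1) + 1 = e - j := by omega
        rw [heq] at hs
        exact_mod_cast hs
      have h2 : (n.choose (e-(j+1)) : ℝ) ≤ q * n.choose (e-j) := by
        have : e - (j+1) = e - j - 1 := by omega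
        rw [this, hq]
        rw [div_mul_eq_mul_div, le_div_iff₀ hl1]
        linarith
      calc (n.choose (e-(j+1)) : ℝ) ≤ q * n.choose (e-j) := h2
        _ ≤ q * (q^j * n.choose e) := by
            apply mul_le_mul_of_nonneg_left IH hq0
        _ = q^(j+1) * n.choose e := by ring
  have hsum : (∑ i ∈ range (e+1), (n.choose i : ℝ)) = ∑ j ∈ range (e+1), (n.choose (e-j) : ℝ) := by
    conv_lhs => rw [← Finset.sum_range_reflect]
    simp
  rw [hsum]
  have h3 : ∑ j ∈ range (e+1), (n.choose (e-j) : ℝ) ≤ ∑ j ∈ range (e+1), q^j * n.choose e := by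
    apply Finset.sum_le_sum
    intro j hj
    rw [Finset.mem_range] at hj
    exact hstep j (by omega : j ≤ e)
  have h4 : ∑ j ∈ range (e+1), q^j * (n.choose e : ℝ) = (∑ j ∈ range (e+1), q^j) * n.choose e := by
    rw [Finset.sum_mul]
  have h5 : (∑ j ∈ range (e+1), q^j) ≤ (1 - q)⁻¹ := by
    have hpos : 0 < 1 - q := by linarith
    rw [inv_eq_one_div, le_div_iff₀ hpos]
    have hgm := geom_sum_mul q (e+1)
    have hq2 : 0 ≤ q^(e+1) := by positivity
    nlinarith [hgm]
  have h6 : (1 - q)⁻¹ = (l:ℝ) + 1 := by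
    rw [hq]
    have : 1 - (l:ℝ)/(l+1) = 1/(l+1) := by field_simp; ring
    rw [this]
    simp
  calc ∑ j ∈ range (e+1), (n.choose (e-j) : ℝ) ≤ (∑ j ∈ range (e+1), q^j) * n.choose e := by
        rw [← h4]; exact h3
    _ ≤ (1-q)⁻¹ * n.choose e := by
        apply mul_le_mul_of_nonneg_right h5 (by positivity)
    _ = ((l:ℝ)+1) * n.choose e := by rw [h6]

theorem card_levels (n e : ℕ) :
    ((univ : Finset (Finset (Fin n))).filter (fun A => A.card ≤ e)).card
      = ∑ i ∈ range (e+1), n.choose i := by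
  classical
  have hmaps : ∀ A ∈ (univ : Finset (Finset (Fin n))).filter (fun A => A.card ≤ e),
      A.card ∈ range (e+1) := by
    intro A hA
    rw [mem_filter] at hA
    rw [mem_range]
    omega
  rw [Finset.card_eq_sum_card_fiberwise hmaps]
  apply Finset.sum_congr rfl
  intro i hi
  rw [mem_range] at hi
  have : ((univ : Finset (Finset (Fin n))).filter (fun A => A.card ≤ e)).filter
      (fun A => A.card = i) = Finset.powersetCard i (univ : Finset (Fin n)) := by
    ext A
    simp only [mem_filter, mem_univ, true_and, Finset.mem_powersetCard_univ]
    constructor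
    · exact fun h => h.2
    · intro h
      exact ⟨by omega, h⟩
  rw [this, Finset.card_powersetCard, Finset.card_univ, Fintype.card_fin]

theorem fiber_bound (n e : ℕ) (B A : Finset (Fin n)) (hB : B.card = e) :
    ((univ : Finset (Equiv.Perm (Fin n))).filter (fun σ : Equiv.Perm (Fin n) => B.image ⇑σ = A)).card
      ≤ e.factorial * (n - e).factorial := by
  classical
  set S := (univ : Finset (Equiv.Perm (Fin n))).filter (fun σ : Equiv.Perm (Fin n) => B.image ⇑σ = A) with hS
  rcases S.eq_empty_or_nonempty with hemp | ⟨σ₀, hσ₀⟩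
  · simp [hemp]
  have hσ₀' : B.image ⇑σ₀ = A := (mem_filter.mp hσ₀).2
  have hAcard : A.card = e := by
    rw [← hσ₀', Finset.card_image_of_injective _ σ₀.injective, hB]
  -- target type
  have hmk : ∀ (σ : Equiv.Perm (Fin n)), B.image ⇑σ = A →
      (∀ x : Fin n, x ∈ B → σ x ∈ A) ∧ (∀ x : Fin n, x ∈ Bᶜ → σ x ∈ Aᶜ) := by
    intro σ hσ
    constructor
    · intro x hx
      rw [← hσ]
      exact Finset.mem_image_of_mem _ hx
    · intro x hx
      rw [Finset.mem_compl] at hx ⊢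
      intro hmem
      rw [← hσ] at hmem
      obtain ⟨y, hy, hyx⟩ := Finset.mem_image.mp hmem
      exact hx ((σ.injective hyx) ▸ hy)
  let Ψ : ∀ (σ : Equiv.Perm (Fin n)), B.image ⇑σ = A →
      ((↥B ↪ ↥A) × (↥(Bᶜ) ↪ ↥(Aᶜ))) := fun σ hσ =>
    ⟨⟨fun b => ⟨σ b.1, (hmk σ hσ).1 b.1 b.2⟩, by
        intro a b hab
        simp only [Subtype.mk.injEq] at hab
        exact Subtype.ext (σ.injective hab)⟩,
     ⟨fun b => ⟨σ b.1, (hmk σ hσ).2 b.1 b.2⟩, by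
        intro a b hab
        simp only [Subtype.mk.injEq] at hab
        exact Subtype.ext (σ.injective hab)⟩⟩
  let Φ : Equiv.Perm (Fin n) → ((↥B ↪ ↥A) × (↥(Bᶜ) ↪ ↥(Aᶜ))) := fun σ =>
    if h : B.image ⇑σ = A then Ψ σ h else Ψ σ₀ hσ₀'
  have hinjOn : Set.InjOn Φ S := by
    intro σ hσ τ hτ hστ
    have hσ' : B.image ⇑σ = A := (mem_filter.mp hσ).2
    have hτ' : B.image ⇑τ = A := (mem_filter.mp hτ).2
    simp only [Φ, dif_pos hσ', dif_pos hτ'] at hστ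
    have h1 := congrArg Prod.fst hστ
    have h2 := congrArg Prod.snd hστ
    apply Equiv.ext
    intro x
    by_cases hx : x ∈ B
    · have := congrArg (fun g => (g ⟨x, hx⟩ : ↥A).1) h1
      exact this
    · have hx' : x ∈ Bᶜ := Finset.mem_compl.mpr hx
      have := congrArg (fun g => (g ⟨x, hx'⟩ : ↥(Aᶜ)).1) h2
      exact this
  have hle := Finset.card_le_card_of_injOn Φ (fun σ _ => Finset.mem_univ (Φ σ)) hinjOn
  rw [Finset.card_univ, Fintype.card_prod, Fintype.card_embedding_eq, Fintype.card_embedding_eq] at hle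
  simp only [Fintype.card_coe, Finset.card_compl, Fintype.card_fin, hB, hAcard,
    Nat.descFactorial_self] at hle
  exact hle

theorem count_lemma {V : Type*} [Fintype V] (G : SimpleGraph V) (n e : ℕ)
    (F : Finset (Finset (Fin n))) (hfree : gFree G n F)
    (hcopy : hasCopy G (kneserGraph n e)) (hen : e ≤ n) :
    n.choose e ≤ (Fintype.card V) *
      ((univ : Finset (Finset (Fin n))).filter (fun A => A.card = e ∧ A ∉ F)).card := by
  classical
  obtain ⟨f₀, hf₀inj, hf₀adj⟩ := hcopy
  set D := (univ : Finset (Finset (Fin n))).filter (fun A => A.card = e ∧ A ∉ F) with hD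
  set fσ : Equiv.Perm (Fin n) → V → Finset (Fin n) := fun σ v => (f₀ v).1.image σ with hfσ
  have hcards : ∀ σ v, (fσ σ v).card = e := by
    intro σ v
    rw [hfσ]
    simp only []
    rw [Finset.card_image_of_injective _ σ.injective]
    exact (f₀ v).2
  have hwit : ∀ σ : Equiv.Perm (Fin n), ∃ v, fσ σ v ∉ F := by
    intro σ
    by_contra hcon
    push_neg at hcon
    apply hfree
    refine ⟨fσ σ, ?_, hcon, ?_⟩
    · intro u v huv
      apply hf₀inj
      apply Subtype.ext
      exact Finset.image_injective σ.injective huv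
    · intro a b hab
      obtain ⟨hne, hdisj⟩ := hf₀adj a b hab
      constructor
      · intro hEq
        exact hne (Subtype.ext (Finset.image_injective σ.injective hEq))
      · rw [hfσ]
        simp only []
        rw [Finset.disjoint_image σ.injective]
        exact hdisj
  let Φ : Equiv.Perm (Fin n) → V × Finset (Fin n) := fun σ =>
    ⟨(hwit σ).choose, fσ σ (hwit σ).choose⟩
  have hmaps : ∀ σ ∈ (univ : Finset (Equiv.Perm (Fin n))), Φ σ ∈ (univ : Finset V) ×ˢ D := by
    intro σ _
    rw [Finset.mem_product]
    refine ⟨mem_univ _, ?_⟩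
    rw [hD, mem_filter]
    exact ⟨mem_univ _, hcards σ _, (hwit σ).choose_spec⟩
  have hcount := Finset.card_eq_sum_card_fiberwise hmaps
  have hfib : ∀ p ∈ (univ : Finset V) ×ˢ D,
      ((univ : Finset (Equiv.Perm (Fin n))).filter (fun σ => Φ σ = p)).card
        ≤ e.factorial * (n - e).factorial := by
    rintro ⟨v, A⟩ _
    have hsub : (univ : Finset (Equiv.Perm (Fin n))).filter (fun σ => Φ σ = (v, A)) ⊆
        (univ : Finset (Equiv.Perm (Fin n))).filter (fun σ : Equiv.Perm (Fin n) => (f₀ v).1.image ⇑σ = A) := by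
      intro σ hσ
      rw [mem_filter] at hσ ⊢
      refine ⟨mem_univ _, ?_⟩
      have h1 : (hwit σ).choose = v := congrArg Prod.fst hσ.2
      have h2 : fσ σ (hwit σ).choose = A := congrArg Prod.snd hσ.2
      rw [h1] at h2
      exact h2
    exact le_trans (Finset.card_le_card hsub) (fiber_bound n e (f₀ v).1 A (f₀ v).2)
  have htotal : ((univ : Finset (Equiv.Perm (Fin n)))).card ≤
      ((univ : Finset V) ×ˢ D).card * (e.factorial * (n - e).factorial) := by
    rw [hcount]
    calc ∑ p ∈ (univ : Finset V) ×ˢ D, ((univ : Finset (Equiv.Perm (Fin n))).filter (fun σ => Φ σ = p)).card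
        ≤ ∑ _p ∈ (univ : Finset V) ×ˢ D, e.factorial * (n - e).factorial :=
          Finset.sum_le_sum hfib
      _ = ((univ : Finset V) ×ˢ D).card * (e.factorial * (n - e).factorial) := by
          rw [Finset.sum_const, smul_eq_mul]
  rw [Finset.card_univ, Fintype.card_perm, Fintype.card_fin, Finset.card_product,
    Finset.card_univ] at htotal
  rw [← Nat.choose_mul_factorial_mul_factorial hen] at htotal
  have hpos : 0 < e.factorial * (n - e).factorial := by positivity
  have := Nat.le_of_mul_le_mul_right (by
    calc n.choose e * (e.factorial * (n - e).factorial)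
        = n.choose e * e.factorial * (n - e).factorial := by ring
      _ ≤ Fintype.card V * D.card * (e.factorial * (n - e).factorial) := by
          rw [mul_assoc] at htotal ⊢
          exact htotal) hpos
  exact this

/-- for a finite simple graph `G` with chromatic number at least `3`,
`2^n - vex(n, G) = Θ_G(C(n, emb(n,G)))`. -/
theorem stmt16 {V : Type*} [Fintype V] (G : SimpleGraph V)
    (hchi : 3 ≤ G.chromaticNumber) :
    ∃ c C : ℝ, 0 < c ∧ 0 < C ∧ ∃ n₀ : ℕ, ∀ n : ℕ, n₀ ≤ n →
      c * (n.choose (emb n G) : ℝ) ≤ (2 : ℝ) ^ n - (vexG n G : ℝ) ∧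
        (2 : ℝ) ^ n - (vexG n G : ℝ) ≤ C * (n.choose (emb n G) : ℝ) := by
  classical
  obtain ⟨v₀, w₀, hodd⟩ := odd_walk_of_chrom G hchi
  obtain ⟨l, hl⟩ := hodd
  have hlen : w₀.length = 2 * l + 1 := by omega
  have hl1 : 1 ≤ l := by
    by_contra hl0
    have hl0' : l = 0 := by omega
    have h01 : (0:ℕ) < w₀.length := by omega
    have hadj := w₀.adj_getVert_succ h01
    have h0 : w₀.getVert 0 = v₀ := SimpleGraph.Walk.getVert_zero w₀
    have h1 : w₀.getVert 1 = v₀ := by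
      have : (1:ℕ) = w₀.length := by omega
      rw [this, SimpleGraph.Walk.getVert_length]
    rw [h0, h1] at hadj
    exact G.irrefl hadj
  have hV : Nonempty V := by
    by_contra hne
    have hempty : IsEmpty V := not_nonempty_iff.mp hne
    have hcol : G.Colorable 0 := ⟨⟨fun v => (hempty.false v).elim, fun {a} => (hempty.false a).elim⟩⟩
    have := hcol.chromaticNumber_le
    have h32 : (3:ℕ∞) ≤ 0 := le_trans hchi this
    norm_num at h32
  set k := Fintype.card V with hk
  have hk1 : 1 ≤ k := Fintype.card_pos
  refine ⟨1/(k:ℝ), (l:ℝ)+1, by positivity, by positivity, k*k + k + 1, ?_⟩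
  intro n hn
  set S : Set ℕ := {m | hasCopy G (kneserGraph n m)} with hSdef
  have hedef : emb n G = sSup S := rfl
  have hbddS : BddAbove S := by
    refine ⟨n, fun m hm => ?_⟩
    obtain ⟨f, _, _⟩ := hm
    have h1 := (f (Classical.arbitrary V)).2
    have h2 := Finset.card_le_univ (f (Classical.arbitrary V)).1
    simp only [Finset.card_univ, Fintype.card_fin] at h2
    omega
  have hkS : k ∈ S := hasCopy_blocks G n k hk1 (by nlinarith : Fintype.card V * k ≤ n)
  have hSne : S.Nonempty := ⟨k, hkS⟩
  have hemem : hasCopy G (kneserGraph n (emb n G)) := by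
    rw [hedef]
    exact Nat.sSup_mem hSne hbddS
  set e := emb n G with he
  have hek : k ≤ e := by rw [hedef]; exact le_csSup hbddS hkS
  have he1 : 1 ≤ e := le_trans hk1 hek
  have hratio : (2*l+1)*e ≤ l*n := by
    obtain ⟨f, hfinj, hfadj⟩ := hemem
    have hwb := walk_bound w₀ hlen f hfadj
    calc (2*l+1)*e = e*(2*l+1) := by ring
      _ ≤ l*n := hwb
  have hen : e ≤ n := by
    have h1 : e * (2*l+1) ≤ n * (2*l+1) := by
      calc e * (2*l+1) = (2*l+1)*e := by ring
        _ ≤ l * n := hratio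
        _ ≤ n * (2*l+1) := by nlinarith
    exact Nat.le_of_mul_le_mul_right h1 (by omega)
  set T : Set ℕ := {c | ∃ F : Finset (Finset (Fin n)), gFree G n F ∧ F.card = c} with hTdef
  have hvdef : vexG n G = sSup T := rfl
  have hTne : T.Nonempty := by
    refine ⟨0, ∅, ?_, Finset.card_empty⟩
    rintro ⟨f, _, hmem, _⟩
    exact absurd (hmem (Classical.arbitrary V)) (Finset.notMem_empty _)
  have hbddT : BddAbove T := by
    refine ⟨2^n, ?_⟩
    rintro c ⟨F, _, hc⟩
    have := Finset.card_le_univ F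
    simp only [Finset.card_univ, Fintype.card_finset, Fintype.card_fin] at this
    omega
  have hvexmem : ∃ F : Finset (Finset (Fin n)), gFree G n F ∧ F.card = vexG n G := by
    have := Nat.sSup_mem hTne hbddT
    rw [← hvdef] at this
    exact this
  have hvex_le_2n : vexG n G ≤ 2^n := by
    obtain ⟨F, _, hc⟩ := hvexmem
    have := Finset.card_le_univ F
    simp only [Finset.card_univ, Fintype.card_finset, Fintype.card_fin] at this
    omega
  constructor
  · -- lower bound
    obtain ⟨Fm, hFmfree, hFmcard⟩ := hvexmem
    have hcount := count_lemma G n e Fm hFmfree hemem hen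
    set D := (univ : Finset (Finset (Fin n))).filter (fun A => A.card = e ∧ A ∉ Fm) with hD
    have hdisj : Disjoint D Fm := by
      rw [Finset.disjoint_left]
      intro A hA hA'
      rw [hD, Finset.mem_filter] at hA
      exact hA.2.2 hA'
    have hDFcard : D.card + Fm.card ≤ 2^n := by
      have h1 : (D ∪ Fm).card = D.card + Fm.card := Finset.card_union_of_disjoint hdisj
      have h2 := Finset.card_le_univ (D ∪ Fm)
      simp only [Finset.card_univ, Fintype.card_finset, Fintype.card_fin] at h2
      omega
    have hnat : n.choose e ≤ k * (2^n - vexG n G) := by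
      have h3 : D.card ≤ 2^n - vexG n G := by omega
      calc n.choose e ≤ k * D.card := hcount
        _ ≤ k * (2^n - vexG n G) := Nat.mul_le_mul_left _ h3
    have hcast : (n.choose e : ℝ) ≤ (k:ℝ) * ((2:ℝ)^n - vexG n G) := by
      have h4 : ((2^n - vexG n G : ℕ) : ℝ) = (2:ℝ)^n - vexG n G := by
        rw [Nat.cast_sub hvex_le_2n]
        norm_num
      calc (n.choose e : ℝ) ≤ ((k * (2^n - vexG n G) : ℕ) : ℝ) := by exact_mod_cast hnat
        _ = (k:ℝ) * ((2:ℝ)^n - vexG n G) := by rw [Nat.cast_mul, h4]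
    rw [div_mul_eq_mul_div, div_le_iff₀ (by positivity : (0:ℝ) < (k:ℝ))]
    calc (1:ℝ) * (n.choose e) = (n.choose e : ℝ) := by ring
      _ ≤ (k:ℝ) * ((2:ℝ)^n - vexG n G) := hcast
      _ = ((2:ℝ)^n - vexG n G) * k := by ring
  · -- upper bound
    set Fth := (univ : Finset (Finset (Fin n))).filter (fun A => e+1 ≤ A.card) with hFth
    have hfree : gFree G n Fth := by
      rintro ⟨f, hfinj, hfmem, hfadj⟩
      have hcards : ∀ v, e+1 ≤ (f v).card := by
        intro v
        have := hfmem v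
        rw [hFth, Finset.mem_filter] at this
        exact this.2
      have hdisjf : ∀ a b, G.Adj a b → Disjoint (f a) (f b) := fun a b h => (hfadj a b h).2
      have hks : k ≤ e + 1 := by omega
      obtain ⟨g, hg1, hg2, hg3⟩ := shrink_lemma (G := G) (s := e+1) hks
        (∑ v, (f v).card) f le_rfl hfinj hcards hdisjf
      have hcopy : hasCopy G (kneserGraph n (e+1)) := by
        refine ⟨fun v => ⟨g v, (hg2 v).2⟩, ?_, ?_⟩
        · intro u v huv
          exact hg1 (congrArg Subtype.val huv)
        · intro a b hab
          refine ⟨?_, hg3 a b hab⟩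
          intro hEq
          exact hab.ne (hg1 (congrArg Subtype.val hEq))
      have h9 : e + 1 ≤ sSup S := le_csSup hbddS (show e+1 ∈ S from hcopy)
      rw [← hedef] at h9
      omega
    have hvex_ge : Fth.card ≤ vexG n G := by
      rw [hvdef]
      exact le_csSup hbddT ⟨Fth, hfree, rfl⟩
    have hsplit : Fth.card + ((univ : Finset (Finset (Fin n))).filter (fun A => A.card ≤ e)).card = 2^n := by
      have h1 := Finset.card_filter_add_card_filter_not
        (s := (univ : Finset (Finset (Fin n)))) (p := fun A => e+1 ≤ A.card)
      simp only [Finset.card_univ, Fintype.card_finset, Fintype.card_fin] at h1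
      rw [← h1, hFth]
      congr 1
      apply congrArg
      apply Finset.filter_congr
      intro A _
      simp only [not_le, Nat.lt_succ_iff]
    have hlevels := card_levels n e
    have hgeom := geom_bound hl1 hratio
    have hfinal : ((2:ℝ)^n - vexG n G) ≤ ((l:ℝ)+1) * n.choose e := by
      have h5 : (2:ℝ)^n - vexG n G ≤ (((univ : Finset (Finset (Fin n))).filter (fun A => A.card ≤ e)).card : ℝ) := by
        have h6 : ((2:ℝ))^n = ((2^n : ℕ) : ℝ) := by norm_num
        rw [h6, ← hsplit]
        push_cast
        have : (Fth.card : ℝ) ≤ (vexG n G : ℝ) := by exact_mod_cast hvex_ge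
        linarith
      rw [hlevels] at h5
      have h7 : ((∑ i ∈ range (e+1), n.choose i : ℕ) : ℝ) = ∑ i ∈ range (e+1), (n.choose i : ℝ) := by
        push_cast
        rfl
      rw [h7] at h5
      calc (2:ℝ)^n - vexG n G ≤ ∑ i ∈ range (e+1), (n.choose i : ℝ) := h5
        _ ≤ ((l:ℝ)+1) * n.choose e := hgeom
    exact hfinal
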